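/- For every r > 0, every s ∈ ℂ that is not an integer and every k ∈ ℤ, one has the symmetry ω̃(−k) = ω̃(k). Equivalently, setting F(k) = (k+s)⁻¹ · Γ((k−s)/2) Γ((k+s+1)/2) / ( Γ((k+s)/2) Γ((k−s+1)/2) ), one has F(−k) = F(k) for all k ∈ ℤ. -/

import Mathlib

noncomputable section

/-- The Fourier coefficients `ω̃(k)` of the dispersion relation on de Sitter space. -/
def omt (r : ℝ) (s : ℂ) (k : ℤ) : ℂ :=
  (r : ℂ)⁻¹ * ((k : ℂ) + s) *
    (Complex.Gamma (((k : ℂ) + s) / 2) * Complex.Gamma (((k : ℂ) + 1 - s) / 2)) /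
    (Complex.Gamma (((k : ℂ) - s) / 2) * Complex.Gamma (((k : ℂ) + 1 + s) / 2))

/-- The Gamma-factor combination `F(k)` occurring in the symmetry proof. -/
def Ffun (s : ℂ) (k : ℤ) : ℂ :=
  ((k : ℂ) + s)⁻¹ *
    (Complex.Gamma (((k : ℂ) - s) / 2) * Complex.Gamma (((k : ℂ) + s + 1) / 2)) /
    (Complex.Gamma (((k : ℂ) + s) / 2) * Complex.Gamma (((k : ℂ) - s + 1) / 2))

open Complex in
/-- Pure Gamma-function identity underlying the symmetry. -/
lemma omt_key (a b : ℂ) (ha : a ≠ 0) (hb : b ≠ 0)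
    (hGb : Gamma b ≠ 0) (hGa' : Gamma (a + 1/2) ≠ 0)
    (hsa : Complex.sin ((Real.pi : ℂ) * a) ≠ 0) (hsb : Complex.sin ((Real.pi : ℂ) * b) ≠ 0)
    (hca : Complex.cos ((Real.pi : ℂ) * a) ≠ 0) (hcb : Complex.cos ((Real.pi : ℂ) * b) ≠ 0)
    (htrig : Complex.sin ((Real.pi : ℂ) * a) * Complex.cos ((Real.pi : ℂ) * b)
      + Complex.cos ((Real.pi : ℂ) * a) * Complex.sin ((Real.pi : ℂ) * b) = 0) :
    (-2*b) * (Gamma (-b) * Gamma (1/2 - a)) / (Gamma (-a) * Gamma (1/2 - b))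
      = (2*a) * (Gamma a * Gamma (b + 1/2)) / (Gamma b * Gamma (a + 1/2)) := by
  have hπ : (Real.pi : ℂ) ≠ 0 := Complex.ofReal_ne_zero.mpr Real.pi_ne_zero
  have P1 : Gamma a * (-a * Gamma (-a)) * Complex.sin ((Real.pi : ℂ) * a) = (Real.pi : ℂ) := by
    have h := Complex.Gamma_mul_Gamma_one_sub a
    rw [show (1 : ℂ) - a = -a + 1 by ring, Complex.Gamma_add_one _ (neg_ne_zero.mpr ha),
      eq_div_iff hsa] at h
    exact h
  have P2 : Gamma b * (-b * Gamma (-b)) * Complex.sin ((Real.pi : ℂ) * b) = (Real.pi : ℂ) := by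
    have h := Complex.Gamma_mul_Gamma_one_sub b
    rw [show (1 : ℂ) - b = -b + 1 by ring, Complex.Gamma_add_one _ (neg_ne_zero.mpr hb),
      eq_div_iff hsb] at h
    exact h
  have P3 : Gamma (a + 1/2) * Gamma (1/2 - a) * Complex.cos ((Real.pi : ℂ) * a)
      = (Real.pi : ℂ) := by
    have h := Complex.Gamma_mul_Gamma_one_sub (a + 1/2)
    rw [show (1 : ℂ) - (a + 1/2) = 1/2 - a by ring,
      show (Real.pi : ℂ) * (a + 1/2) = (Real.pi : ℂ) * a + (Real.pi : ℂ)/2 by ring,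
      Complex.sin_add_pi_div_two, eq_div_iff hca] at h
    exact h
  have P4 : Gamma (b + 1/2) * Gamma (1/2 - b) * Complex.cos ((Real.pi : ℂ) * b)
      = (Real.pi : ℂ) := by
    have h := Complex.Gamma_mul_Gamma_one_sub (b + 1/2)
    rw [show (1 : ℂ) - (b + 1/2) = 1/2 - b by ring,
      show (Real.pi : ℂ) * (b + 1/2) = (Real.pi : ℂ) * b + (Real.pi : ℂ)/2 by ring,
      Complex.sin_add_pi_div_two, eq_div_iff hcb] at h
    exact h
  have hGna : Gamma (-a) ≠ 0 := by
    intro h; rw [h] at P1; simp at P1; exact hπ P1.symm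
  have hGb2 : Gamma (1/2 - b) ≠ 0 := by
    intro h; rw [h] at P4; simp at P4; exact hπ P4.symm
  rw [div_eq_div_iff (mul_ne_zero hGna hGb2) (mul_ne_zero hGb hGa')]
  set sa := Complex.sin ((Real.pi : ℂ) * a)
  set sb := Complex.sin ((Real.pi : ℂ) * b)
  set ca := Complex.cos ((Real.pi : ℂ) * a)
  set cb := Complex.cos ((Real.pi : ℂ) * b)
  have hS : sa * cb * (sb * ca) ≠ 0 :=
    mul_ne_zero (mul_ne_zero hsa hcb) (mul_ne_zero hsb hca)
  apply mul_right_cancel₀ hS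
  linear_combination (2*sa*cb*(Gamma (a + 1/2) * Gamma (1/2 - a) * ca))*P2
    + (2*sa*cb*(Real.pi : ℂ))*P3
    + (2*sb*ca*(Gamma (b + 1/2) * Gamma (1/2 - b) * cb))*P1
    + (2*sb*ca*(Real.pi : ℂ))*P4
    + (2*(Real.pi : ℂ)^2)*htrig

/-- the symmetry `ω̃(−k) = ω̃(k)`, equivalently `F(−k) = F(k)`. -/
theorem omt_symmetry (r : ℝ) (hr : 0 < r) (s : ℂ)
    (hs : ∀ n : ℤ, s ≠ (n : ℂ)) (k : ℤ) :
    omt r s (-k) = omt r s k ∧ Ffun s (-k) = Ffun s k := by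
  open Complex in
  set a : ℂ := ((k : ℂ) + s) / 2 with ha_def
  set b : ℂ := ((k : ℂ) - s) / 2 with hb_def
  clear_value a b
  have hπ : (Real.pi : ℂ) ≠ 0 := Complex.ofReal_ne_zero.mpr Real.pi_ne_zero
  have ha : a ≠ 0 := by
    rw [ha_def]; intro h
    exact hs (-k) (by push_cast; linear_combination 2*h)
  have hb : b ≠ 0 := by
    rw [hb_def]; intro h
    exact hs k (by push_cast; linear_combination -2*h)
  have hGa : Complex.Gamma a ≠ 0 := by
    refine Complex.Gamma_ne_zero fun m h => hs (-2*m - k) ?_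
    rw [ha_def] at h; push_cast; linear_combination 2*h
  have hGb : Complex.Gamma b ≠ 0 := by
    refine Complex.Gamma_ne_zero fun m h => hs (2*m + k) ?_
    rw [hb_def] at h; push_cast; linear_combination -2*h
  have hGa' : Complex.Gamma (a + 1/2) ≠ 0 := by
    refine Complex.Gamma_ne_zero fun m h => hs (-2*m - k - 1) ?_
    rw [ha_def] at h; push_cast; linear_combination 2*h
  have hGb' : Complex.Gamma (b + 1/2) ≠ 0 := by
    refine Complex.Gamma_ne_zero fun m h => hs (2*m + k + 1) ?_
    rw [hb_def] at h; push_cast; linear_combination -2*h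
  have hsa : Complex.sin ((Real.pi : ℂ) * a) ≠ 0 := by
    rw [Ne, Complex.sin_eq_zero_iff]
    rintro ⟨n, hn⟩
    have : a = (n : ℂ) := mul_left_cancel₀ hπ (by linear_combination hn)
    rw [ha_def] at this
    exact hs (2*n - k) (by push_cast; linear_combination 2*this)
  have hsb : Complex.sin ((Real.pi : ℂ) * b) ≠ 0 := by
    rw [Ne, Complex.sin_eq_zero_iff]
    rintro ⟨n, hn⟩
    have : b = (n : ℂ) := mul_left_cancel₀ hπ (by linear_combination hn)
    rw [hb_def] at this
    exact hs (k - 2*n) (by push_cast; linear_combination -2*this)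
  have hca : Complex.cos ((Real.pi : ℂ) * a) ≠ 0 := by
    rw [Ne, Complex.cos_eq_zero_iff]
    rintro ⟨n, hn⟩
    have : a = ((2*n + 1) : ℂ) / 2 := mul_left_cancel₀ hπ (by linear_combination hn)
    rw [ha_def] at this
    exact hs (2*n + 1 - k) (by push_cast; linear_combination 2*this)
  have hcb : Complex.cos ((Real.pi : ℂ) * b) ≠ 0 := by
    rw [Ne, Complex.cos_eq_zero_iff]
    rintro ⟨n, hn⟩
    have : b = ((2*n + 1) : ℂ) / 2 := mul_left_cancel₀ hπ (by linear_combination hn)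
    rw [hb_def] at this
    exact hs (k - 2*n - 1) (by push_cast; linear_combination -2*this)
  have htrig : Complex.sin ((Real.pi : ℂ) * a) * Complex.cos ((Real.pi : ℂ) * b)
      + Complex.cos ((Real.pi : ℂ) * a) * Complex.sin ((Real.pi : ℂ) * b) = 0 := by
    have h0 : Complex.sin ((Real.pi : ℂ) * a + (Real.pi : ℂ) * b) = 0 := by
      rw [show (Real.pi : ℂ) * a + (Real.pi : ℂ) * b = (k : ℂ) * (Real.pi : ℂ) by
        rw [ha_def, hb_def]; ring]
      exact Complex.sin_eq_zero_iff.mpr ⟨k, rfl⟩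
    rw [Complex.sin_add] at h0
    linear_combination h0
  have hGna : Complex.Gamma (-a) ≠ 0 := by
    refine Complex.Gamma_ne_zero fun m h => hs (2*m - k) ?_
    rw [ha_def] at h; push_cast; push_cast at h; linear_combination -2*h
  have hGnb : Complex.Gamma (-b) ≠ 0 := by
    refine Complex.Gamma_ne_zero fun m h => hs (k - 2*m) ?_
    rw [hb_def] at h; push_cast; push_cast at h; linear_combination 2*h
  have hGa2 : Complex.Gamma (1/2 - a) ≠ 0 := by
    refine Complex.Gamma_ne_zero fun m h => hs (2*m - k + 1) ?_
    rw [ha_def] at h; push_cast; push_cast at h; linear_combination -2*h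
  have hGb2 : Complex.Gamma (1/2 - b) ≠ 0 := by
    refine Complex.Gamma_ne_zero fun m h => hs (k - 2*m - 1) ?_
    rw [hb_def] at h; push_cast; push_cast at h; linear_combination 2*h
  have hmain := omt_key a b ha hb hGb hGa' hsa hsb hca hcb htrig
  constructor
  · simp only [omt, Int.cast_neg]
    rw [show (-(k : ℂ) + s) / 2 = -b by rw [hb_def]; ring,
      show (-(k : ℂ) + 1 - s) / 2 = 1/2 - a by rw [ha_def]; ring,
      show (-(k : ℂ) - s) / 2 = -a by rw [ha_def]; ring,
      show (-(k : ℂ) + 1 + s) / 2 = 1/2 - b by rw [hb_def]; ring,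
      show ((k : ℂ) + s) / 2 = a from ha_def.symm,
      show ((k : ℂ) + 1 - s) / 2 = b + 1/2 by rw [hb_def]; ring,
      show ((k : ℂ) - s) / 2 = b from hb_def.symm,
      show ((k : ℂ) + 1 + s) / 2 = a + 1/2 by rw [ha_def]; ring,
      show -(k : ℂ) + s = -2*b by rw [hb_def]; ring,
      show (k : ℂ) + s = 2*a by rw [ha_def]; ring]
    rw [mul_assoc, mul_div_assoc, hmain, ← mul_div_assoc, ← mul_assoc]
  · simp only [Ffun, Int.cast_neg]
    rw [show (-(k : ℂ) - s) / 2 = -a by rw [ha_def]; ring,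
      show (-(k : ℂ) + s + 1) / 2 = 1/2 - b by rw [hb_def]; ring,
      show (-(k : ℂ) + s) / 2 = -b by rw [hb_def]; ring,
      show (-(k : ℂ) - s + 1) / 2 = 1/2 - a by rw [ha_def]; ring,
      show ((k : ℂ) - s) / 2 = b from hb_def.symm,
      show ((k : ℂ) + s + 1) / 2 = a + 1/2 by rw [ha_def]; ring,
      show ((k : ℂ) + s) / 2 = a from ha_def.symm,
      show ((k : ℂ) - s + 1) / 2 = b + 1/2 by rw [hb_def]; ring,
      show -(k : ℂ) + s = -2*b by rw [hb_def]; ring,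
      show (k : ℂ) + s = 2*a by rw [ha_def]; ring]
    have hmain' := (div_eq_div_iff (mul_ne_zero hGna hGb2)
      (mul_ne_zero hGb hGa')).mp hmain
    rw [div_eq_div_iff (mul_ne_zero hGnb hGa2) (mul_ne_zero hGa hGb')]
    have h2b : (-2 : ℂ) * b ≠ 0 := mul_ne_zero (by norm_num) hb
    have h2a : (2 : ℂ) * a ≠ 0 := mul_ne_zero (by norm_num) ha
    field_simp
    rw [show ((1:ℂ) - 2*b)/2 = 1/2 - b by ring, show (2*b + 1)/2 = b + 1/2 by ring,
      show ((1:ℂ) - 2*a)/2 = 1/2 - a by ring, show (2*a + 1)/2 = a + 1/2 by ring]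
    linear_combination (1/2 : ℂ) * hmain'
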